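/- arXiv:1208.0175 — 2 statements merged into one kernel-verified Lean document; each statement's English description precedes it below -/
import Mathlib

section
/- Let p > 3 be a prime. For any z ∈ ℤ_p^*, log_p(z) ≡ -p·Q_p(z) (mod p²), where log_p is the Iwasawa p-adic logarithm. -/
/-!
**Statement 1.**  Let `p > 3` be a prime.  For any `z ∈ ℤ_p^*`,
`log_p(z) ≡ -p·Q_p(z) (mod p²)`, where `log_p` is the Iwasawa `p`-adic logarithm and
`Q_p(z)` is the Fermat quotient of `z`, i.e. the residue of `(z^{p-1} - 1)/p` modulo `p`.

We represent the Iwasawa logarithm (restricted to `ℤ_p^*`, where it takes values in `ℤ_p`)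
as a function `logp : ℤ_[p]ˣ → ℤ_[p]` together with its characterizing properties:
it transforms products into sums, it vanishes on roots of unity, and on the ball
`‖z - 1‖ < 1` it is given by the usual logarithm series `∑_{k ≥ 1} (-1)^{k+1} (z-1)^k / k`.

The Fermat quotient is represented as follows: `w : ℤ_[p]` is the element with
`z^{p-1} - 1 = p·w` (it exists by Fermat's little theorem), and the residue of `w`
modulo `p` is the natural number `w.appr 1 < p` (`PadicInt.appr w 1 ≡ w [mod p]`).
The congruence `log_p(z) ≡ -p·Q_p(z) (mod p²)` then reads
`p² ∣ logp z + p·(w.appr 1)`.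
-/

lemma aux_norm_natCast (p : ℕ) [Fact p.Prime] (n : ℕ) (hn : 0 < n) :
    ∃ t : ℕ, ‖((n : ℕ) : ℚ_[p])‖ = (p : ℝ) ^ (-(t : ℤ)) ∧ p ^ t ≤ n := by
  have hq : ((n : ℕ) : ℚ_[p]) ≠ 0 := Nat.cast_ne_zero.mpr hn.ne'
  obtain ⟨m, hm⟩ := Padic.padicNormE.image hq
  have hple : (1 : ℝ) < p := by exact_mod_cast (Fact.out : p.Prime).one_lt
  have hnorm : ‖((n : ℕ) : ℚ_[p])‖ = (p : ℝ) ^ (-m) := by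
    rw [hm]; push_cast; ring
  have hle1 : ‖((n : ℕ) : ℚ_[p])‖ ≤ 1 := by
    simpa using Padic.norm_int_le_one (p := p) (n : ℤ)
  have hm0 : 0 ≤ m := by
    by_contra h
    push_neg at h
    have : (1 : ℝ) < (p : ℝ) ^ (-m) := one_lt_zpow₀ hple (by omega)
    rw [hnorm] at hle1; linarith
  refine ⟨m.toNat, ?_, ?_⟩
  · rw [hnorm]; congr 1; omega
  · have hdvd : ((p : ℤ) ^ m.toNat) ∣ (n : ℤ) := by
      rw [← Padic.norm_int_le_pow_iff_dvd]
      rw [show ((n : ℤ) : ℚ_[p]) = ((n : ℕ) : ℚ_[p]) by push_cast; ring, hnorm]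
      apply zpow_le_zpow_right₀ hple.le
      omega
    have := Int.le_of_dvd (by exact_mod_cast hn) hdvd
    exact_mod_cast this

theorem statement_1 (p : ℕ) [Fact p.Prime] (hp : 3 < p)
    (logp : ℤ_[p]ˣ → ℤ_[p])
    (hlog_mul : ∀ u v : ℤ_[p]ˣ, logp (u * v) = logp u + logp v)
    (hlog_root : ∀ u : ℤ_[p]ˣ, (∃ m : ℕ, 0 < m ∧ u ^ m = 1) → logp u = 0)
    (hlog_series : ∀ u : ℤ_[p]ˣ, ‖((u : ℤ_[p]) : ℚ_[p]) - 1‖ < 1 →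
      ((logp u : ℤ_[p]) : ℚ_[p]) =
        ∑' k : ℕ, (-1) ^ k * (((u : ℤ_[p]) : ℚ_[p]) - 1) ^ (k + 1) / (k + 1))
    (z : ℤ_[p]ˣ) (w : ℤ_[p]) (hw : (z : ℤ_[p]) ^ (p - 1) - 1 = p * w) :
    (p : ℤ_[p]) ^ 2 ∣ logp z + p * (w.appr 1) := by
  have hprime : p.Prime := Fact.out
  have hp5 : 5 ≤ p := by
    rcases Nat.lt_or_ge p 5 with h | h
    · interval_cases p
      exact absurd hprime (by norm_num)
    · exact h
  have hp1R : (1 : ℝ) < p := by exact_mod_cast hprime.one_lt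
  have hp0R : (0 : ℝ) < p := by positivity
  -- log of powers
  have hlog_one : logp 1 = 0 := hlog_root 1 ⟨1, one_pos, one_pow 1⟩
  have hlog_pow : ∀ (u : ℤ_[p]ˣ) (n : ℕ), logp (u ^ n) = (n : ℤ_[p]) * logp u := by
    intro u n
    induction n with
    | zero => simpa using hlog_one
    | succ n ih => rw [pow_succ, hlog_mul, ih]; push_cast; ring
  -- the unit u = z^(p-1)
  set u : ℤ_[p]ˣ := z ^ (p - 1) with hu
  have hucoe : ((u : ℤ_[p]) : ℚ_[p]) - 1 = (p : ℚ_[p]) * (w : ℚ_[p]) := by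
    have : (u : ℤ_[p]) = (z : ℤ_[p]) ^ (p - 1) := Units.val_pow_eq_pow_val z (p - 1)
    rw [this]
    have := congrArg (fun x : ℤ_[p] => (x : ℚ_[p])) hw
    push_cast at this ⊢
    linear_combination this
  set X : ℚ_[p] := (p : ℚ_[p]) * (w : ℚ_[p]) with hX
  have hXnorm : ‖X‖ ≤ (p : ℝ)⁻¹ := by
    rw [hX, Padic.padicNormE.mul, Padic.norm_p]
    calc (p:ℝ)⁻¹ * ‖((w : ℤ_[p]) : ℚ_[p])‖ ≤ (p:ℝ)⁻¹ * 1 := by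
          apply mul_le_mul_of_nonneg_left _ (by positivity)
          rw [PadicInt.padic_norm_e_of_padicInt]; exact PadicInt.norm_le_one w
      _ = (p:ℝ)⁻¹ := mul_one _
  have hXlt1 : ‖X‖ < 1 := lt_of_le_of_lt hXnorm (by
    rw [inv_lt_one_iff₀]; right; exact hp1R)
  -- norm of terms
  set f : ℕ → ℚ_[p] := fun k => (-1) ^ k * X ^ (k + 1) / (k + 1) with hf
  have hfnorm : ∀ k : ℕ, ∃ t : ℕ, p ^ t ≤ k + 1 ∧
      ‖f k‖ ≤ (p : ℝ) ^ (-(k + 1 : ℤ)) * (p : ℝ) ^ (t : ℤ) := by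
    intro k
    obtain ⟨t, ht1, ht2⟩ := aux_norm_natCast p (k + 1) (Nat.succ_pos k)
    refine ⟨t, ht2, ?_⟩
    have hk1 : ((k : ℚ_[p]) + 1) = ((k + 1 : ℕ) : ℚ_[p]) := by push_cast; ring
    rw [hf]
    simp only []
    rw [norm_div, norm_mul, norm_pow, norm_pow, norm_neg, norm_one, one_pow, one_mul,
      hk1, ht1]
    rw [div_eq_mul_inv, ← zpow_neg, neg_neg]
    apply mul_le_mul_of_nonneg_right _ (by positivity)
    calc ‖X‖ ^ (k + 1) ≤ ((p : ℝ)⁻¹) ^ (k + 1) :=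
          pow_le_pow_left₀ (norm_nonneg X) hXnorm (k + 1)
      _ = (p : ℝ) ^ (-(k + 1 : ℤ)) := by
          rw [show (-(k + 1 : ℤ)) = -((k + 1 : ℕ) : ℤ) by push_cast; ring, zpow_neg,
            zpow_natCast, inv_pow]
  -- summability
  have hsummable : Summable f := by
    apply Summable.of_norm_bounded (g := fun k : ℕ => ((k : ℝ) + 1) * ((p:ℝ)⁻¹) ^ (k + 1))
    · have base : Summable (fun n : ℕ => ((n : ℝ)) ^ 1 * ((p:ℝ)⁻¹) ^ n) :=
        summable_pow_mul_geometric_of_norm_lt_one 1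
          (by rw [Real.norm_eq_abs, abs_of_pos (by positivity)];
              rw [inv_lt_one_iff₀]; right; exact hp1R)
      have := (summable_nat_add_iff 1).mpr base
      simpa using this
    · intro k
      obtain ⟨t, ht1, ht2⟩ := hfnorm k
      calc ‖f k‖ ≤ (p : ℝ) ^ (-(k + 1 : ℤ)) * (p : ℝ) ^ (t : ℤ) := ht2
        _ ≤ (p : ℝ) ^ (-(k + 1 : ℤ)) * ((k : ℝ) + 1) := by
            apply mul_le_mul_of_nonneg_left _ (by positivity)
            calc (p : ℝ) ^ (t : ℤ) = ((p ^ t : ℕ) : ℝ) := by rw [zpow_natCast]; push_cast; ring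
              _ ≤ ((k + 1 : ℕ) : ℝ) := by exact_mod_cast ht1
              _ = (k : ℝ) + 1 := by push_cast; ring
        _ = ((k : ℝ) + 1) * ((p:ℝ)⁻¹) ^ (k + 1) := by
            rw [← zpow_natCast (p:ℝ)⁻¹, inv_zpow, ← zpow_neg]
            push_cast; ring
  -- series value
  have hseries : ((logp u : ℤ_[p]) : ℚ_[p]) = ∑' k : ℕ, f k := by
    have h := hlog_series u (by rw [hucoe]; exact hXlt1)
    rw [hucoe] at h
    exact h
  -- tail bound
  have htail : ‖(∑' k : ℕ, f (k + 1))‖ ≤ (p : ℝ) ^ (-2 : ℤ) := by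
    apply IsUltrametricDist.norm_tsum_le_of_forall_le_of_nonneg (by positivity)
    intro k
    obtain ⟨t, ht1, ht2⟩ := hfnorm (k + 1)
    have htk : t ≤ k := by
      by_contra h
      push_neg at h
      have h1 : p ^ (k + 1) ≤ p ^ t := Nat.pow_le_pow_right (by omega) (by omega)
      have h2 : p ^ (k + 1) ≤ k + 2 := le_trans h1 ht1
      have h5 : k < 5 ^ k := Nat.lt_pow_self (by norm_num)
      have h6 : 5 ^ (k + 1) ≤ p ^ (k + 1) := Nat.pow_le_pow_left (by omega) _
      have h7 : 5 ^ (k + 1) = 5 ^ k * 5 := pow_succ 5 k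
      omega
    calc ‖f (k + 1)‖ ≤ (p : ℝ) ^ (-((k : ℤ) + 1 + 1)) * (p : ℝ) ^ (t : ℤ) := by
          have hcast : (-((k : ℤ) + 1 + 1)) = -(((k + 1 : ℕ) : ℤ) + 1) := by push_cast; ring
          rw [hcast]; exact ht2
      _ = (p : ℝ) ^ ((t : ℤ) - (k + 2)) := by
          rw [show ((t : ℤ) - (k + 2)) = -((k : ℤ) + 1 + 1) + t by ring,
            zpow_add₀ (ne_of_gt hp0R)]
      _ ≤ (p : ℝ) ^ (-2 : ℤ) := zpow_le_zpow_right₀ hp1R.le (by omega)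
  have hzero : f 0 = X := by
    simp [hf]
  have hsum_split : (∑' k : ℕ, f k) = f 0 + ∑' k : ℕ, f (k + 1) :=
    Summable.tsum_eq_zero_add hsummable
  have hdiff : ‖((logp u : ℤ_[p]) : ℚ_[p]) - X‖ ≤ (p : ℝ) ^ (-2 : ℤ) := by
    rw [hseries, hsum_split, hzero]
    simpa using htail
  have hdiffZ : (logp u - p * w) ∈ Ideal.span {(p : ℤ_[p]) ^ 2} := by
    rw [← PadicInt.norm_le_pow_iff_mem_span_pow, PadicInt.norm_def]
    have hc : ((logp u - p * w : ℤ_[p]) : ℚ_[p]) = ((logp u : ℤ_[p]) : ℚ_[p]) - X := by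
      rw [hX]; push_cast; ring
    rw [hc]
    exact_mod_cast hdiff
  have hdvd1 : (p : ℤ_[p]) ^ 2 ∣ logp u - p * w := Ideal.mem_span_singleton.mp hdiffZ
  have happr : (p : ℤ_[p]) ∣ w - (w.appr 1 : ℤ_[p]) := by
    have h := PadicInt.appr_spec 1 w
    rwa [Ideal.mem_span_singleton, pow_one] at h
  have hlogu : logp u = ((p - 1 : ℕ) : ℤ_[p]) * logp z := hlog_pow z (p - 1)
  have hunit : IsUnit ((p - 1 : ℕ) : ℤ_[p]) := by
    rw [PadicInt.isUnit_iff]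
    refine le_antisymm (PadicInt.norm_le_one _) ?_
    by_contra h
    push_neg at h
    have hcast : (((p - 1 : ℕ) : ℤ) : ℤ_[p]) = ((p - 1 : ℕ) : ℤ_[p]) := by push_cast; ring
    rw [← hcast, PadicInt.norm_int_lt_one_iff_dvd] at h
    have : (p : ℤ) ∣ ((p - 1 : ℕ) : ℤ) := h
    have hle := Int.le_of_dvd (by exact_mod_cast (by omega : 0 < p - 1)) this
    omega
  have key : ((p - 1 : ℕ) : ℤ_[p]) * (logp z + p * (w.appr 1)) =
      (logp u - p * w) + p * (w - (w.appr 1 : ℤ_[p])) + p ^ 2 * (w.appr 1 : ℤ_[p]) := by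
    rw [hlogu, Nat.cast_sub (by omega : 1 ≤ p)]
    push_cast
    ring
  have hdvd2 : (p : ℤ_[p]) ^ 2 ∣ ((p - 1 : ℕ) : ℤ_[p]) * (logp z + p * (w.appr 1)) := by
    rw [key]
    refine dvd_add (dvd_add hdvd1 ?_) ⟨(w.appr 1 : ℤ_[p]), rfl⟩
    rw [pow_two]
    exact mul_dvd_mul_left _ happr
  exact hunit.dvd_mul_left.mp hdvd2
end

section
/- Let K/ℚ be a real abelian extension of degree g and let p > 3 be a prime. For any integer n ≥ 1, there exists a fundamental system of units of O_K such that R_p(K) ≡ (-p)^{g-1} R^{(p,n)}(K) (mod p^{n+g}). -/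
/-!
**Statement 4.**  Let `K/ℚ` be a real abelian extension of degree `g` and let `p > 3` be a
prime.  For any integer `n ≥ 1`, there exists a fundamental system of units of `𝓞 K` such
that `R_p(K) ≡ (-p)^{g-1}·R^{(p,n)}(K)  (mod p^{n+g})`.

Setup (following the paper):
* `K` is a number field, Galois over `ℚ` with abelian Galois group (`hab`), totally real
  (`hreal`); `g = Module.finrank ℚ K`.
* A fixed embedding of `ℚ^alg` into `ℚ_p^alg` is chosen; composing it with the `g` real
  embeddings of `K` yields the `g` distinct embeddings
  `σ : Fin g → (K →+* AlgebraicClosure ℚ_[p])` (`hσ`: pairwise distinct, hence all of them).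
* The Iwasawa `p`-adic logarithm is represented by `logp` with its characterizing properties.
* `R_p(K) = det(log_p(σ_j(ε_k)))_{j,k=1,…,g-1}` is Leopoldt's `p`-adic regulator.
* For `z ∈ ℤ_p^*` (more generally, a `p`-adic unit `z` as below), writing `z = ω(z)·⟨z⟩` with
  `ω(z)` a root of unity and `⟨z⟩ = 1 + p·z̃`, the quantity `Q_{p,n}(z)` is the truncation
  (residue) of `-(1/p)·log_p(1 + p·z̃)` modulo `p^{n+1}`.  Since the Iwasawa logarithm kills
  roots of unity, `log_p(1 + p·z̃) = log_p(z)`, so `Q_{p,n}(z)` is characterized by: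
  `Q_{p,n}(z) < p^{n+1}` and `p·Q_{p,n}(z) ≡ -log_p(z)  (mod p^{n+2})`.  The matrix
  `Q j k = Q_{p,n}(σ_j(ε_k))` is specified this way by `hQ` (congruences in the ring of
  integers of `ℚ_p^alg` are expressed via `IsIntegral ℤ_[p]` of the quotient by the
  appropriate power of `p`).
* `R^{(p,n)}(K) = det(Q_{p,n}(σ_j(ε_k)))_{j,k=1,…,g-1}` is the `p`-adic regulator mod `p^n`.
-/

open NumberField in
/-- `ε` is a fundamental system of units of `𝓞 K` (for `K` real abelian of degree `g`, the
unit rank is `g - 1`): the `ε k` are multiplicatively independent and, together with the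
roots of unity, they generate the full unit group. -/
def IsFundamentalSystem (K : Type*) [Field K] [NumberField K]
    (ε : Fin (Module.finrank ℚ K - 1) → (𝓞 K)ˣ) : Prop :=
  (∀ c : Fin (Module.finrank ℚ K - 1) → ℤ, IsOfFinOrder (∏ k, ε k ^ c k) → c = 0) ∧
    ∀ u : (𝓞 K)ˣ, ∃ (ζ : (𝓞 K)ˣ) (c : Fin (Module.finrank ℚ K - 1) → ℤ),
      IsOfFinOrder ζ ∧ u = ζ * ∏ k, ε k ^ c k


noncomputable instance (p : ℕ) [Fact p.Prime] : Algebra ℤ_[p] (AlgebraicClosure ℚ_[p]) :=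
  ((algebraMap ℚ_[p] (AlgebraicClosure ℚ_[p])).comp (algebraMap ℤ_[p] ℚ_[p])).toAlgebra

set_option maxHeartbeats 1000000 in
set_option synthInstance.maxHeartbeats 200000 in
theorem aux_det (p : ℕ) [Fact p.Prime] {F : Type*} [Field F] [Algebra ℤ_[p] F] [CharZero F]
    (m n : ℕ) (L : Matrix (Fin m) (Fin m) F) (Q : Matrix (Fin m) (Fin m) ℕ)
    (hQ : ∀ j k, IsIntegral ℤ_[p] ((L j k + (p : F) * (Q j k : F)) / (p : F) ^ (n + 2))) :
    IsIntegral ℤ_[p]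
      ((L.det - (-(p : F)) ^ m * (Q.map (Nat.cast : ℕ → F)).det) / (p : F) ^ (n + m + 1)) := by
  have hp0 : (p : F) ≠ 0 := Nat.cast_ne_zero.mpr (Fact.out : p.Prime).ne_zero
  set R := integralClosure ℤ_[p] F with hR
  let φ : R →+* F := (Subalgebra.val R).toRingHom
  let E : Matrix (Fin m) (Fin m) R := fun j k =>
    ⟨(L j k + (p : F) * (Q j k : F)) / (p : F) ^ (n + 2),
      (mem_integralClosure_iff _ _).mpr (hQ j k)⟩
  let Qm : Matrix (Fin m) (Fin m) R := fun j k => ((Q j k : ℕ) : R)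
  let A : Matrix (Fin m) (Fin m) R := fun j k => Qm j k - (p : R) ^ (n + 1) * E j k
  have hφE : ∀ j k, φ (E j k) = (L j k + (p : F) * (Q j k : F)) / (p : F) ^ (n + 2) :=
    fun j k => rfl
  have hφA : ∀ j k, φ (A j k) = (Q j k : F) - (p : F) ^ (n + 1) * φ (E j k) := by
    intro j k
    simp only [A, Qm, map_sub, map_mul, map_pow, map_natCast]
  have hent : ∀ j k, L j k = (-(p : F)) * φ (A j k) := by
    intro j k
    rw [hφA, hφE]
    have h2 : (p : F) ^ (n + 2) ≠ 0 := pow_ne_zero _ hp0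
    field_simp
    ring
  have hLmat : L = (-(p : F)) • (A.map φ) := by
    ext j k
    simp [Matrix.map_apply, hent j k]
  have hdetL : L.det = (-(p : F)) ^ m * φ A.det := by
    rw [hLmat, Matrix.det_smul, Fintype.card_fin, RingHom.map_det, RingHom.mapMatrix_apply]
  obtain ⟨c, hc⟩ : (p : R) ^ (n + 1) ∣ (A.det - Qm.det) := by
    rw [← Ideal.mem_span_singleton]
    rw [← Ideal.Quotient.eq]
    rw [RingHom.map_det, RingHom.map_det, RingHom.mapMatrix_apply, RingHom.mapMatrix_apply]
    congr 1
    have h0 : Ideal.Quotient.mk (Ideal.span {(p : R) ^ (n + 1)}) ((p : R) ^ (n + 1)) = 0 :=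
      Ideal.Quotient.eq_zero_iff_mem.mpr (Ideal.mem_span_singleton_self _)
    ext j k
    show Ideal.Quotient.mk _ (A j k) = Ideal.Quotient.mk _ (Qm j k)
    simp only [A]
    rw [map_sub, map_mul, h0, zero_mul, sub_zero]
  have hQmap : (Q.map (Nat.cast : ℕ → F)).det = φ Qm.det := by
    rw [RingHom.map_det, RingHom.mapMatrix_apply]
    congr 1
  have hφc : φ A.det = φ Qm.det + (p : F) ^ (n + 1) * φ c := by
    have := congrArg φ hc
    rw [map_sub, map_mul, map_pow, map_natCast] at this
    linear_combination this
  have key : (L.det - (-(p : F)) ^ m * (Q.map (Nat.cast : ℕ → F)).det) / (p : F) ^ (n + m + 1)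
      = φ ((-1) ^ m * c) := by
    rw [hdetL, hQmap, hφc, map_mul, map_pow, map_neg, map_one]
    have hpow : (p : F) ^ (n + m + 1) ≠ 0 := pow_ne_zero _ hp0
    field_simp
    ring
  rw [key]
  exact (mem_integralClosure_iff _ _).mp ((-1) ^ m * c : R).2


open NumberField in
theorem statement_4 (p : ℕ) [Fact p.Prime] (hp : 3 < p)
    (K : Type*) [Field K] [NumberField K] [IsGalois ℚ K]
    (hab : ∀ σ τ : K ≃ₐ[ℚ] K, σ * τ = τ * σ)
    (hreal : ∀ φ : K →+* ℂ, ComplexEmbedding.IsReal φ)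
    -- the embeddings of `K` into the algebraic closure of `ℚ_p`
    (σ : Fin (Module.finrank ℚ K) → (K →+* AlgebraicClosure ℚ_[p]))
    (hσ : Function.Injective σ)
    -- the Iwasawa `p`-adic logarithm and its characterizing properties
    (logp : AlgebraicClosure ℚ_[p] → AlgebraicClosure ℚ_[p])
    (hlog_mul : ∀ x y : AlgebraicClosure ℚ_[p], x ≠ 0 → y ≠ 0 →
      logp (x * y) = logp x + logp y)
    (hlog_root : ∀ x : AlgebraicClosure ℚ_[p], (∃ m : ℕ, 0 < m ∧ x ^ m = 1) → logp x = 0)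
    (hlog_p : logp ((p : ℕ) : AlgebraicClosure ℚ_[p]) = 0)
    (hlog_series : ∀ x : ℚ_[p], ‖x‖ < 1 →
      logp (algebraMap ℚ_[p] (AlgebraicClosure ℚ_[p]) (1 + x)) =
        algebraMap ℚ_[p] (AlgebraicClosure ℚ_[p])
          (∑' k : ℕ, (-1) ^ k * x ^ (k + 1) / (k + 1)))
    (n : ℕ) (hn : 1 ≤ n) :
    -- there exists a fundamental system of units with
    -- `R_p(K) ≡ (-p)^{g-1} R^{(p,n)}(K)  (mod p^{n+g})`
    ∃ ε : Fin (Module.finrank ℚ K - 1) → (𝓞 K)ˣ, IsFundamentalSystem K ε ∧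
      ∀ Q : Matrix (Fin (Module.finrank ℚ K - 1)) (Fin (Module.finrank ℚ K - 1)) ℕ,
        (∀ j k, Q j k < p ^ (n + 1) ∧
          IsIntegral ℤ_[p]
            ((logp (σ (Fin.castLE (Nat.sub_le _ 1) j) ((ε k : 𝓞 K) : K)) + p * Q j k) /
              (p : AlgebraicClosure ℚ_[p]) ^ (n + 2))) →
        IsIntegral ℤ_[p]
          ((Matrix.det
              (Matrix.of fun j k =>
                logp (σ (Fin.castLE (Nat.sub_le _ 1) j) ((ε k : 𝓞 K) : K))) -
            (-(p : AlgebraicClosure ℚ_[p])) ^ (Module.finrank ℚ K - 1) *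
              Matrix.det (Matrix.of fun j k => ((Q j k : AlgebraicClosure ℚ_[p])))) /
            (p : AlgebraicClosure ℚ_[p]) ^ (n + Module.finrank ℚ K)) := by
  
  classical
  letI : CommGroup (𝓞 K)ˣ := inferInstance
  haveI hchar : CharZero (AlgebraicClosure ℚ_[p]) :=
    charZero_of_injective_algebraMap (algebraMap ℚ_[p] (AlgebraicClosure ℚ_[p])).injective
  have hg : 1 ≤ Module.finrank ℚ K := Module.finrank_pos
  have hcplx : InfinitePlace.nrComplexPlaces K = 0 := by
    rw [Fintype.card_eq_zero_iff]
    exact ⟨fun w => (InfinitePlace.not_isReal_iff_isComplex.mpr w.2)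
      (InfinitePlace.isReal_iff.mpr (hreal w.1.embedding))⟩
  have hcard : Fintype.card (InfinitePlace K) = Module.finrank ℚ K := by
    have h1 := InfinitePlace.card_eq_nrRealPlaces_add_nrComplexPlaces K
    have h2 := InfinitePlace.card_add_two_mul_card_eq_rank K
    omega
  have hrank : Units.rank K = Module.finrank ℚ K - 1 := by
    rw [Units.rank, hcard]
  let e : Fin (Module.finrank ℚ K - 1) ≃ Fin (Units.rank K) := finCongr hrank.symm
  refine ⟨fun k => Units.fundSystem K (e k), ⟨?_, ?_⟩, ?_⟩
  · intro c hc
    set x : (𝓞 K)ˣ := ∏ k, Units.fundSystem K (e k) ^ c k with hx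
    have hx' : x = 1 * ∏ i, Units.fundSystem K i ^ (c (e.symm i)) := by
      rw [one_mul, hx, ← Equiv.prod_comp e (fun i => Units.fundSystem K i ^ c (e.symm i))]
      simp
    have hxt : x ∈ Units.torsion K := (CommGroup.mem_torsion _).mpr hc
    have h1 : (fun i => c (e.symm i)) =
        (Units.basisModTorsion K).repr (Additive.ofMul (x : (𝓞 K)ˣ ⧸ Units.torsion K)) :=
      Units.fun_eq_repr K (Subgroup.one_mem _) hx'
    have h2 : (fun _ : Fin (Units.rank K) => (0 : ℤ)) =
        (Units.basisModTorsion K).repr (Additive.ofMul (x : (𝓞 K)ˣ ⧸ Units.torsion K)) :=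
      Units.fun_eq_repr K hxt (by simp)
    funext k
    have := congrFun (h1.trans h2.symm) (e k)
    simpa using this
  · intro u
    obtain ⟨⟨ζ, c⟩, h, -⟩ := Units.exist_unique_eq_mul_prod K u
    refine ⟨ζ, fun k => c (e k), (CommGroup.mem_torsion _).mp ζ.2, ?_⟩
    rw [h]
    congr 1
    exact (Equiv.prod_comp e (fun i => Units.fundSystem K i ^ c i)).symm
  · intro Q hQ
    have hmn : n + Module.finrank ℚ K = n + (Module.finrank ℚ K - 1) + 1 := by omega
    rw [hmn]
    exact aux_det p (Module.finrank ℚ K - 1) n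
      (Matrix.of fun j k => logp (σ (Fin.castLE (Nat.sub_le _ 1) j)
        ((Units.fundSystem K (e k) : 𝓞 K) : K))) Q (fun j k => (hQ j k).2)
end
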